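/- For every β with 0 < β < 2π there exists a constant C₁(β) > 0 such that ψ(x) ≥ C₁(β) ‖x‖² for all x ∈ [−2π+β, 2π−β] × [−2π+β, 2π−β]. In particular, ψ(x) ≥ ‖x‖²/(4L) for all x with ‖x‖ ≤ √6. -/

import Mathlib

open Real

noncomputable section

private lemma one_sub_cos_eq' (x : ℝ) : 1 - Real.cos x = 2 * Real.sin (x/2) ^ 2 := by
  have h := Real.cos_two_mul (x/2)
  have h2 := Real.sin_sq_add_cos_sq (x/2)
  have h3 : Real.cos (2 * (x/2)) = Real.cos x := by ring_nf
  nlinarith [h3]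

private lemma sin_lb_cubic' {u : ℝ} (hu : 0 ≤ u) : u - u ^ 3 / 6 ≤ Real.sin u := by
  have hmono : Monotone (fun t : ℝ => Real.sin t - t + t ^ 3 / 6) := by
    apply monotone_of_deriv_nonneg
    · fun_prop
    · intro t
      have hd : HasDerivAt (fun t : ℝ => Real.sin t - t + t ^ 3 / 6)
          (Real.cos t - 1 + 3 * t ^ 2 / 6) t := by
        have := ((Real.hasDerivAt_sin t).sub (hasDerivAt_id t)).add
          (((hasDerivAt_pow 3 t)).div_const 6)
        simp at this; exact this
      rw [hd.deriv]
      have := Real.one_sub_sq_div_two_le_cos (x := t)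
      nlinarith
  have h0 := hmono hu
  simp at h0
  nlinarith [h0]

private lemma chord_sin' {a u : ℝ} (ha : 0 < a) (hap : a ≤ π) (hu : 0 ≤ u) (hua : u ≤ a) :
    u / a * Real.sin a ≤ Real.sin u := by
  have hc := strictConcaveOn_sin_Icc.concaveOn
  have hmem0 : (0:ℝ) ∈ Set.Icc 0 π := ⟨le_rfl, Real.pi_pos.le⟩
  have hmema : a ∈ Set.Icc (0:ℝ) π := ⟨ha.le, hap⟩
  have h1 : (0:ℝ) ≤ 1 - u / a := by
    have : u / a ≤ 1 := (div_le_one ha).2 hua; linarith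
  have h2 : (0:ℝ) ≤ u / a := by positivity
  have h3 : (1 - u / a) + u / a = 1 := by ring
  have h := hc.2 hmem0 hmema h1 h2 h3
  have he : (1 - u / a) • (0:ℝ) + (u / a) • a = u := by
    rw [smul_eq_mul, smul_eq_mul, mul_zero, zero_add]; field_simp
  rw [he] at h
  simpa [Real.sin_zero, smul_eq_mul] using h

private lemma coord1' {a x : ℝ} (ha : 0 < a) (hap : a ≤ π) (hx : |x| ≤ 2 * a) :
    (Real.sin a / a) ^ 2 / 2 * x ^ 2 ≤ 1 - Real.cos x := by
  set u := |x| / 2 with hu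
  have hu0 : 0 ≤ u := by positivity
  have hua : u ≤ a := by simp only [hu]; linarith
  have hsa : 0 ≤ Real.sin a := Real.sin_nonneg_of_nonneg_of_le_pi ha.le hap
  have hchord := chord_sin' ha hap hu0 hua
  have hrhs0 : 0 ≤ u / a * Real.sin a := by positivity
  have hsq : (u / a * Real.sin a) ^ 2 ≤ Real.sin u ^ 2 := by
    apply pow_le_pow_left₀ hrhs0 hchord
  have hcx : 1 - Real.cos x = 2 * Real.sin u ^ 2 := by
    rcases abs_cases x with ⟨he, _⟩ | ⟨he, _⟩
    · rw [hu, he]; exact one_sub_cos_eq' x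
    · rw [hu, he]
      rw [show (1:ℝ) - Real.cos x = 1 - Real.cos (-x) by rw [Real.cos_neg]]
      exact one_sub_cos_eq' (-x)
  rw [hcx]
  have hx2 : u ^ 2 = x ^ 2 / 4 := by
    rw [hu]; rw [div_pow, sq_abs]; ring
  have : (u / a * Real.sin a) ^ 2 = (Real.sin a / a) ^ 2 * u ^ 2 := by ring
  nlinarith [hsq]

private lemma coord2' {x : ℝ} (hx : x ^ 2 ≤ 6) : x ^ 2 / 4 ≤ 1 - Real.cos x := by
  set u := |x| / 2 with hu
  have hu0 : 0 ≤ u := by positivity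
  have hu2 : u ^ 2 = x ^ 2 / 4 := by rw [hu, div_pow, sq_abs]; norm_num
  have hu6 : u ^ 2 ≤ 3 / 2 := by rw [hu2]; linarith
  have hlb := sin_lb_cubic' hu0
  have hlb0 : 0 ≤ u - u ^ 3 / 6 := by nlinarith
  have hsq : (u - u ^ 3 / 6) ^ 2 ≤ Real.sin u ^ 2 := pow_le_pow_left₀ hlb0 hlb 2
  have hcx : 1 - Real.cos x = 2 * Real.sin u ^ 2 := by
    rcases abs_cases x with ⟨he, _⟩ | ⟨he, _⟩
    · rw [hu, he]; exact one_sub_cos_eq' x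
    · rw [hu, he]
      rw [show (1:ℝ) - Real.cos x = 1 - Real.cos (-x) by rw [Real.cos_neg]]
      exact one_sub_cos_eq' (-x)
  rw [hcx]
  nlinarith [hsq, sq_nonneg u, sq_nonneg (u^2)]

private lemma psi_ge_two_terms (L : ℕ) (hL : 1 < L) (s : Fin L → ℤ × ℤ)
    (h1 : s ⟨0, by omega⟩ = (1, 0)) (h2 : s ⟨1, by omega⟩ = (0, 1)) (x y : ℝ) :
    (1 / L : ℝ) * ((1 - Real.cos x) + (1 - Real.cos y)) ≤
      1 - (1 / L : ℝ) * ∑ ℓ, Real.cos ((s ℓ).1 * x + (s ℓ).2 * y) := by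
  have hL0 : (0:ℝ) < L := by positivity
  set f : Fin L → ℝ := fun ℓ => 1 - Real.cos ((s ℓ).1 * x + (s ℓ).2 * y) with hf
  have hpsi : 1 - (1 / L : ℝ) * ∑ ℓ, Real.cos ((s ℓ).1 * x + (s ℓ).2 * y)
      = (1 / L : ℝ) * ∑ ℓ, f ℓ := by
    rw [hf]
    rw [Finset.sum_sub_distrib]
    simp [Finset.card_univ]
    field_simp
    congr 1
    exact Finset.sum_congr rfl (fun i _ => by rw [mul_comm x, mul_comm y])
  rw [hpsi]
  have i0 : Fin L := ⟨0, by omega⟩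
  have i1 : Fin L := ⟨1, by omega⟩
  have hne : (⟨0, by omega⟩ : Fin L) ≠ ⟨1, by omega⟩ := by
    intro h; simpa using congrArg Fin.val h
  have hsub : ({⟨0, by omega⟩, ⟨1, by omega⟩} : Finset (Fin L)) ⊆ Finset.univ :=
    Finset.subset_univ _
  have hnn : ∀ i ∈ Finset.univ, i ∉ ({⟨0, by omega⟩, ⟨1, by omega⟩} : Finset (Fin L)) →
      0 ≤ f i := by
    intro i _ _
    simp only [hf]
    have := Real.cos_le_one ((s i).1 * x + (s i).2 * y)
    linarith
  have hsum := Finset.sum_le_sum_of_subset_of_nonneg hsub hnn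
  rw [Finset.sum_pair hne] at hsum
  have hf0 : f ⟨0, by omega⟩ = 1 - Real.cos x := by
    simp [hf, h1]
  have hf1 : f ⟨1, by omega⟩ = 1 - Real.cos y := by
    simp [hf, h2]
  rw [hf0, hf1] at hsum
  apply mul_le_mul_of_nonneg_left hsum (by positivity)


/-- `ψ(x) = 1 − (1/L) ∑_{ℓ=1}^L cos(s_ℓ · x)`. -/
def psi (L : ℕ) (s : Fin L → ℤ × ℤ) (x y : ℝ) : ℝ :=
  1 - (1 / L) * ∑ ℓ, Real.cos ((s ℓ).1 * x + (s ℓ).2 * y)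

private theorem psi_lower_bound_aux (L : ℕ) (hL : 1 < L) (s : Fin L → ℤ × ℤ)
    (hs : ∀ ℓ, s ℓ ≠ 0)
    (h1 : s ⟨0, by omega⟩ = (1, 0)) (h2 : s ⟨1, by omega⟩ = (0, 1)) :
    (∀ β : ℝ, 0 < β → β < 2 * π → ∃ C₁ : ℝ, 0 < C₁ ∧
      ∀ x y : ℝ, x ∈ Set.Icc (-(2 * π) + β) (2 * π - β) →
        y ∈ Set.Icc (-(2 * π) + β) (2 * π - β) →
        C₁ * (x ^ 2 + y ^ 2) ≤ 1 - (1 / L : ℝ) * ∑ ℓ, Real.cos ((s ℓ).1 * x + (s ℓ).2 * y)) ∧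
    (∀ x y : ℝ, Real.sqrt (x ^ 2 + y ^ 2) ≤ Real.sqrt 6 →
      (x ^ 2 + y ^ 2) / (4 * L) ≤ 1 - (1 / L : ℝ) * ∑ ℓ, Real.cos ((s ℓ).1 * x + (s ℓ).2 * y)) := by
  have hL0 : (0:ℝ) < L := by positivity
  constructor
  · intro β hβ0 hβ2
    set a := π - β / 2 with haa
    have ha : 0 < a := by rw [haa]; linarith
    have hap : a ≤ π := by rw [haa]; linarith
    have hsa : 0 < Real.sin a := Real.sin_pos_of_pos_of_lt_pi ha (by rw [haa]; linarith)
    refine ⟨(Real.sin a / a) ^ 2 / 2 / L, by positivity, ?_⟩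
    intro x y hx hy
    have hxa : |x| ≤ 2 * a := by
      rw [abs_le, haa]
      exact ⟨by linarith [hx.1], by linarith [hx.2]⟩
    have hya : |y| ≤ 2 * a := by
      rw [abs_le, haa]
      exact ⟨by linarith [hy.1], by linarith [hy.2]⟩
    have c1 := coord1' ha hap hxa
    have c2 := coord1' ha hap hya
    have key := psi_ge_two_terms L hL s h1 h2 x y
    have : (Real.sin a / a) ^ 2 / 2 / L * (x ^ 2 + y ^ 2)
        ≤ (1 / L : ℝ) * ((1 - Real.cos x) + (1 - Real.cos y)) := by
      rw [div_mul_eq_mul_div, div_le_iff₀ hL0] at *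
      have h := add_le_add c1 c2
      calc (Real.sin a / a) ^ 2 / 2 * (x ^ 2 + y ^ 2)
          ≤ (1 - Real.cos x) + (1 - Real.cos y) := by nlinarith
        _ = 1 / ↑L * (1 - Real.cos x + (1 - Real.cos y)) * ↑L := by field_simp
    linarith
  · intro x y hxy
    have h6 : x ^ 2 + y ^ 2 ≤ 6 := by
      have := (Real.sqrt_le_sqrt_iff (by positivity)).1 hxy
      linarith [this]
    have c1 := coord2' (x := x) (by nlinarith [sq_nonneg y])
    have c2 := coord2' (x := y) (by nlinarith [sq_nonneg x])
    have key := psi_ge_two_terms L hL s h1 h2 x y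
    have : (x ^ 2 + y ^ 2) / (4 * L) ≤ (1 / L : ℝ) * ((1 - Real.cos x) + (1 - Real.cos y)) := by
      rw [div_le_iff₀ (by positivity)]
      have : (1 / L : ℝ) * ((1 - Real.cos x) + (1 - Real.cos y)) * (4 * L)
          = 4 * ((1 - Real.cos x) + (1 - Real.cos y)) := by field_simp
      rw [this]
      linarith
    linarith


/-- for `0 < β < 2π` there is `C₁(β) > 0` with `ψ(x) ≥ C₁(β)‖x‖²` on
`[−2π+β, 2π−β]²`; in particular `ψ(x) ≥ ‖x‖²/(4L)` whenever `‖x‖ ≤ √6`. -/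
theorem psi_lower_bound (L : ℕ) (hL : 2 ≤ L) (s : Fin L → ℤ × ℤ)
    (hs : ∀ ℓ, s ℓ ≠ 0)
    (h1 : s ⟨0, by omega⟩ = (1, 0)) (h2 : s ⟨1, by omega⟩ = (0, 1)) :
    (∀ β : ℝ, 0 < β → β < 2 * π → ∃ C₁ : ℝ, 0 < C₁ ∧
      ∀ x y : ℝ, x ∈ Set.Icc (-(2 * π) + β) (2 * π - β) →
        y ∈ Set.Icc (-(2 * π) + β) (2 * π - β) →
        C₁ * (x ^ 2 + y ^ 2) ≤ psi L s x y) ∧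
    (∀ x y : ℝ, Real.sqrt (x ^ 2 + y ^ 2) ≤ Real.sqrt 6 →
      (x ^ 2 + y ^ 2) / (4 * L) ≤ psi L s x y) := by
  exact psi_lower_bound_aux L hL s hs h1 h2

end
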